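/- arXiv:1911.06519 — 2 statements merged into one kernel-verified Lean document; each statement's English description precedes it below -/
import Mathlib

section
/- Let Ω ⊆ ℝ² be a compact set with nonempty boundary and let b(x) be the signed distance to Ω (positive outside, negative inside). If b is differentiable at x with b(x) ≠ 0, then there is a unique closest point P(x) ∈ ∂Ω to x, and ∇b(x) = (x − P(x))/b(x). In particular ‖∇b(x)‖ = 1. -/
open Classical

open Metric

lemma hasGradientAt_norm_aux {E : Type*} [NormedAddCommGroup E] [InnerProductSpace ℝ E]
    [CompleteSpace E] {v : E} (hv : v ≠ 0) :
    HasGradientAt (fun y : E => ‖y‖) (‖v‖⁻¹ • v) v := by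
  have hvv : (inner ℝ v v : ℝ) ≠ 0 := by
    simpa [inner_self_eq_zero] using hv
  have h1 : HasFDerivAt (fun y : E => (inner ℝ y y : ℝ))
      ((fderivInnerCLM ℝ (v, v)).comp
        ((ContinuousLinearMap.id ℝ E).prod (ContinuousLinearMap.id ℝ E))) v :=
    (hasFDerivAt_id v).inner ℝ (hasFDerivAt_id v)
  have h2 : HasDerivAt Real.sqrt (1 / (2 * Real.sqrt ((inner ℝ v v : ℝ)))) ((inner ℝ v v : ℝ)) :=
    Real.hasDerivAt_sqrt hvv
  have h3 : HasFDerivAt (fun y : E => Real.sqrt ((inner ℝ y y : ℝ)))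
      ((1 / (2 * Real.sqrt ((inner ℝ v v : ℝ)))) •
        ((fderivInnerCLM ℝ (v, v)).comp
          ((ContinuousLinearMap.id ℝ E).prod (ContinuousLinearMap.id ℝ E)))) v :=
    h2.comp_hasFDerivAt (f := fun y : E => (inner ℝ y y : ℝ)) v h1
  have heq : (fun y : E => ‖y‖) = fun y : E => Real.sqrt ((inner ℝ y y : ℝ)) := by
    funext y
    rw [real_inner_self_eq_norm_mul_norm, Real.sqrt_mul_self (norm_nonneg y)]
  rw [hasGradientAt_iff_hasFDerivAt, heq]
  refine h3.congr_fderiv ?_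
  symm
  ext w
  simp only [InnerProductSpace.toDual_apply_apply, ContinuousLinearMap.coe_smul',
    Pi.smul_apply, ContinuousLinearMap.coe_comp', Function.comp_apply,
    ContinuousLinearMap.prod_apply, ContinuousLinearMap.coe_id', id_eq,
    fderivInnerCLM_apply, smul_eq_mul]
  rw [real_inner_self_eq_norm_mul_norm, Real.sqrt_mul_self (norm_nonneg v),
    real_inner_smul_left, real_inner_comm w v]
  have h : ‖v‖ ≠ 0 := norm_ne_zero_iff.mpr hv
  field_simp
  ring

/-- Signed distance to a compact set `Ω` (positive outside, negative inside):
if `b` is differentiable at `x` with `b x ≠ 0`, then there is a unique closest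
point `P ∈ ∂Ω` to `x`, and `∇b(x) = (x − P)/b(x)`; in particular `‖∇b(x)‖ = 1`. -/
theorem signed_distance_gradient
    (Ω : Set (EuclideanSpace ℝ (Fin 2))) (hΩ : IsCompact Ω)
    (hfr : (frontier Ω).Nonempty)
    (b : EuclideanSpace ℝ (Fin 2) → ℝ)
    (hb : ∀ y, b y = if y ∈ Ω then -(infDist y (frontier Ω)) else infDist y (frontier Ω))
    (x : EuclideanSpace ℝ (Fin 2))
    (hdiff : DifferentiableAt ℝ b x) (hbx : b x ≠ 0) :
    (∃! P, P ∈ frontier Ω ∧ dist x P = infDist x (frontier Ω)) ∧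
    (∀ P, P ∈ frontier Ω ∧ dist x P = infDist x (frontier Ω) →
      gradient b x = (b x)⁻¹ • (x - P)) ∧
    ‖gradient b x‖ = 1 := by
  have hK : IsCompact (frontier Ω) :=
    hΩ.of_isClosed_subset isClosed_frontier hΩ.isClosed.frontier_subset
  set ε : ℝ := if x ∈ Ω then -1 else 1 with hεdef
  have hε2 : ε * ε = 1 := by unfold ε; split <;> norm_num
  have hεinv : ε⁻¹ = ε := by unfold ε; split <;> norm_num
  have hεabs : |ε| = 1 := by unfold ε; split <;> norm_num
  have habs : ∀ y, |b y| = infDist y (frontier Ω) := by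
    intro y
    rw [hb y]
    split <;> simp [abs_of_nonneg infDist_nonneg]
  have hbε : b x = ε * infDist x (frontier Ω) := by
    rw [hb x]; unfold ε; split <;> ring
  have hdx : infDist x (frontier Ω) ≠ 0 := by
    rw [← habs x]; exact abs_ne_zero.mpr hbx
  have key : ∀ P, P ∈ frontier Ω ∧ dist x P = infDist x (frontier Ω) →
      gradient b x = (b x)⁻¹ • (x - P) := by
    rintro P ⟨hP, hPd⟩
    have hxP : x ≠ P := by
      intro h; apply hdx; rw [← hPd, h, dist_self]
    have hv : x - P ≠ 0 := sub_ne_zero.mpr hxP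
    have hnv : ‖x - P‖ = infDist x (frontier Ω) := by rw [← dist_eq_norm, hPd]
    -- gradient of y ↦ ‖y - P‖ at x
    have hnorm : HasFDerivAt (fun y => ‖y - P‖)
        ((InnerProductSpace.toDual ℝ _) (‖x - P‖⁻¹ • (x - P))) x := by
      have h1 := (hasGradientAt_norm_aux hv).hasFDerivAt
      have h2 : HasFDerivAt (fun y : EuclideanSpace ℝ (Fin 2) => y - P)
          (ContinuousLinearMap.id ℝ _) x := (hasFDerivAt_id x).sub_const P
      simpa [Function.comp_def] using h1.comp x h2
    -- the function f with a local min at x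
    have hεb : HasFDerivAt (fun y => ε * b y) (ε • fderiv ℝ b x) x := by
      simpa [Pi.smul_def, smul_eq_mul] using hdiff.hasFDerivAt.const_smul ε
    have hf : HasFDerivAt (fun y => ‖y - P‖ - ε * b y)
        ((InnerProductSpace.toDual ℝ _) (‖x - P‖⁻¹ • (x - P)) - ε • fderiv ℝ b x) x :=
      hnorm.sub hεb
    have hmin : IsLocalMin (fun y => ‖y - P‖ - ε * b y) x := by
      apply Filter.Eventually.of_forall
      intro y
      have h1 : ε * b y ≤ ‖y - P‖ := by
        calc ε * b y ≤ |ε * b y| := le_abs_self _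
          _ = infDist y (frontier Ω) := by rw [abs_mul, hεabs, one_mul, habs]
          _ ≤ dist y P := infDist_le_dist_of_mem hP
          _ = ‖y - P‖ := dist_eq_norm y P
      show ‖x - P‖ - ε * b x ≤ ‖y - P‖ - ε * b y
      have h2 : ‖x - P‖ - ε * b x = 0 := by
        rw [hbε, hnv, ← mul_assoc, hε2, one_mul, sub_self]
      linarith
    have hzero := hmin.hasFDerivAt_eq_zero hf
    have h3 : (InnerProductSpace.toDual ℝ _) (‖x - P‖⁻¹ • (x - P)) = ε • fderiv ℝ b x :=
      sub_eq_zero.mp hzero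
    have h4 : ‖x - P‖⁻¹ • (x - P) = ε • gradient b x := by
      have := congrArg (InnerProductSpace.toDual ℝ _).symm h3
      simpa [gradient, map_smul] using this
    have h5 : gradient b x = ε • (‖x - P‖⁻¹ • (x - P)) := by
      rw [h4, smul_smul, hε2, one_smul]
    rw [h5, hbε, ← hnv, smul_smul, mul_inv, hεinv]
  obtain ⟨P, hP, hPd⟩ := hK.exists_infDist_eq_dist hfr x
  have hPmem : P ∈ frontier Ω ∧ dist x P = infDist x (frontier Ω) := ⟨hP, hPd.symm⟩
  refine ⟨⟨P, hPmem, ?_⟩, key, ?_⟩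
  · intro Q hQ
    have h1 := key Q hQ
    have h2 := key P hPmem
    have h3 : (b x)⁻¹ • (x - Q) = (b x)⁻¹ • (x - P) := by rw [← h1, ← h2]
    have h4 := smul_right_injective _ (inv_ne_zero hbx) h3
    have : -Q = -P := by
      have := congrArg (fun z => z - x) h4
      simpa [sub_sub_cancel_left] using h4
    simpa using this
  · rw [key P hPmem, norm_smul, norm_inv, Real.norm_eq_abs, habs, ← dist_eq_norm,
      hPmem.2, inv_mul_cancel₀ hdx]
end

section
/- Let c_r > 0 and z = (p_x, p_y, v_x, v_y) ∈ ℝ⁴ with (v_x, v_y) ≠ 0 and with the quantity D(z) := (v_x² + v_y²)ψ(z) + (p_x v_x + p_y v_y) ≠ 0, where ψ is the smaller root of (v_x² + v_y²)t² + 2(p_x v_x + p_y v_y)t + (p_x² + p_y² − c_r²) = 0 (assumed real). Then ψ is differentiable at z and ∂ψ/∂p_x = −(v_x ψ + p_x)/D, ∂ψ/∂p_y = −(v_y ψ + p_y)/D, ∂ψ/∂v_x = −(v_x ψ² + p_x ψ)/D, ∂ψ/∂v_y = −(v_y ψ² + p_y ψ)/D. -/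
noncomputable abbrev psiAuxProj (i : Fin 4) : EuclideanSpace ℝ (Fin 4) →L[ℝ] ℝ :=
  PiLp.proj (𝕜 := ℝ) 2 (fun _ : Fin 4 => ℝ) i

set_option maxHeartbeats 2000000 in
/-- Partial derivatives of the time-to-reach function `ψ`, obtained by implicit
differentiation of its defining quadratic, where `z = (p_x, p_y, v_x, v_y) ∈ ℝ⁴`
and `D(z) = (v_x²+v_y²)ψ(z) + (p_x v_x + p_y v_y) ≠ 0`. -/
theorem psi_partial_derivatives
    (c_r : ℝ) (hc : 0 < c_r)
    (Ψ : EuclideanSpace ℝ (Fin 4) → ℝ)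
    (hΨ : ∀ z : EuclideanSpace ℝ (Fin 4), Ψ z =
      (-(z 0 * z 2 + z 1 * z 3) -
        Real.sqrt ((z 0 * z 2 + z 1 * z 3)^2 -
          ((z 2)^2 + (z 3)^2) * ((z 0)^2 + (z 1)^2 - c_r^2))) / ((z 2)^2 + (z 3)^2))
    (z : EuclideanSpace ℝ (Fin 4))
    (hv : ¬(z 2 = 0 ∧ z 3 = 0))
    (hΔ : 0 ≤ (z 0 * z 2 + z 1 * z 3)^2 - ((z 2)^2 + (z 3)^2) * ((z 0)^2 + (z 1)^2 - c_r^2))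
    (D : ℝ) (hDdef : D = ((z 2)^2 + (z 3)^2) * Ψ z + (z 0 * z 2 + z 1 * z 3))
    (hD : D ≠ 0) :
    DifferentiableAt ℝ Ψ z ∧
    fderiv ℝ Ψ z (EuclideanSpace.single 0 1) = -(z 2 * Ψ z + z 0) / D ∧
    fderiv ℝ Ψ z (EuclideanSpace.single 1 1) = -(z 3 * Ψ z + z 1) / D ∧
    fderiv ℝ Ψ z (EuclideanSpace.single 2 1) = -(z 2 * (Ψ z)^2 + z 0 * Ψ z) / D ∧
    fderiv ℝ Ψ z (EuclideanSpace.single 3 1) = -(z 3 * (Ψ z)^2 + z 1 * Ψ z) / D := by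
  have hq0 : (z 2)^2 + (z 3)^2 ≠ 0 := by
    intro h
    have h2 : (z 2)^2 = 0 := le_antisymm (by nlinarith [sq_nonneg (z 3)]) (sq_nonneg _)
    have h3 : (z 3)^2 = 0 := le_antisymm (by nlinarith [sq_nonneg (z 2)]) (sq_nonneg _)
    exact hv ⟨pow_eq_zero_iff two_ne_zero |>.mp h2, pow_eq_zero_iff two_ne_zero |>.mp h3⟩
  have hq02 : z 2 * z 2 + z 3 * z 3 ≠ 0 := by
    rw [show z 2 * z 2 + z 3 * z 3 = (z 2)^2 + (z 3)^2 from by ring]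
    exact hq0
  -- D = -sqrt Δ
  have hsD : Real.sqrt ((z 0 * z 2 + z 1 * z 3)^2 -
      ((z 2)^2 + (z 3)^2) * ((z 0)^2 + (z 1)^2 - c_r^2)) = -D := by
    rw [hDdef, hΨ z]
    field_simp
    ring
  have hΔpos : 0 < (z 0 * z 2 + z 1 * z 3)^2 -
      ((z 2)^2 + (z 3)^2) * ((z 0)^2 + (z 1)^2 - c_r^2) := by
    rcases hΔ.lt_or_eq with h | h
    · exact h
    · exfalso; apply hD
      have : Real.sqrt _ = -D := hsD
      rw [← h, Real.sqrt_zero] at this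
      linarith
  have hΔne : (z 0 * z 2 + z 1 * z 3)^2 -
      ((z 2)^2 + (z 3)^2) * ((z 0)^2 + (z 1)^2 - c_r^2) ≠ 0 := ne_of_gt hΔpos
  have hD2 : D * D = (z 0 * z 2 + z 1 * z 3) * (z 0 * z 2 + z 1 * z 3) -
      (z 2 * z 2 + z 3 * z 3) * (z 0 * z 0 + z 1 * z 1 - c_r ^ 2) := by
    have h := Real.sq_sqrt hΔ
    rw [hsD] at h
    linear_combination h
  have hP0 : z 0 * z 0 + z 1 * z 1 - c_r ^ 2 =
      ((z 0 * z 2 + z 1 * z 3) * (z 0 * z 2 + z 1 * z 3) - D * D) / (z 2 * z 2 + z 3 * z 3) := by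
    rw [eq_div_iff hq02]
    linear_combination hD2
  have hp : ∀ i : Fin 4, HasFDerivAt (fun w : EuclideanSpace ℝ (Fin 4) => w i)
      (psiAuxProj i) z := fun i => (psiAuxProj i).hasFDerivAt
  have ha := ((hp 0).mul (hp 2)).add ((hp 1).mul (hp 3))
  have hqd := ((hp 2).mul (hp 2)).add ((hp 3).mul (hp 3))
  have hPd := (((hp 0).mul (hp 0)).add ((hp 1).mul (hp 1))).sub_const (c_r^2)
  have hΔd := (ha.mul ha).sub (hqd.mul hPd)
  have hΔne2 : (z 0 * z 2 + z 1 * z 3) * (z 0 * z 2 + z 1 * z 3) -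
      (z 2 * z 2 + z 3 * z 3) * (z 0 * z 0 + z 1 * z 1 - c_r ^ 2) ≠ 0 := by
    rw [show (z 0 * z 2 + z 1 * z 3) * (z 0 * z 2 + z 1 * z 3) -
      (z 2 * z 2 + z 3 * z 3) * (z 0 * z 0 + z 1 * z 1 - c_r ^ 2) =
      (z 0 * z 2 + z 1 * z 3)^2 - ((z 2)^2 + (z 3)^2) * ((z 0)^2 + (z 1)^2 - c_r^2) from by ring]
    exact hΔne
  have hs := (Real.hasDerivAt_sqrt hΔne2).comp_hasFDerivAt z hΔd
  have hsD2 : Real.sqrt ((z 0 * z 2 + z 1 * z 3) * (z 0 * z 2 + z 1 * z 3) -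
      (z 2 * z 2 + z 3 * z 3) * (z 0 * z 0 + z 1 * z 1 - c_r ^ 2)) = -D := by
    rw [show (z 0 * z 2 + z 1 * z 3) * (z 0 * z 2 + z 1 * z 3) -
      (z 2 * z 2 + z 3 * z 3) * (z 0 * z 0 + z 1 * z 1 - c_r ^ 2) =
      (z 0 * z 2 + z 1 * z 3)^2 - ((z 2)^2 + (z 3)^2) * ((z 0)^2 + (z 1)^2 - c_r^2) from by ring]
    exact hsD
  have hinv := (hasDerivAt_inv hq02).comp_hasFDerivAt z hqd
  have hΨ0 := (ha.neg.sub hs).mul hinv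
  have hΨd : HasFDerivAt Ψ _ z := hΨ0.congr_of_eventuallyEq (Filter.Eventually.of_forall fun w => by simp only [hΨ w, Function.comp, div_eq_mul_inv, Pi.mul_apply, Pi.add_apply, Pi.sub_apply, Pi.neg_apply, Pi.pow_apply]; ring_nf)
  refine ⟨hΨd.differentiableAt, ?_, ?_, ?_, ?_⟩ <;>
  · rw [hΨd.fderiv]
    simp only [ContinuousLinearMap.smul_apply, ContinuousLinearMap.add_apply,
      ContinuousLinearMap.sub_apply, ContinuousLinearMap.neg_apply, PiLp.proj_apply, Function.comp,
      EuclideanSpace.single_apply, smul_eq_mul, Fin.isValue, Pi.mul_apply, Pi.add_apply, Pi.sub_apply, Pi.neg_apply, Pi.pow_apply]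
    simp only [Fin.reduceEq, reduceIte, mul_one, mul_zero, add_zero, zero_add, sub_zero, neg_zero, one_mul]
    rw [hsD2, hΨ z, hsD]
    try rw [hP0]
    field_simp
    ring
end
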